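/- Suppose r_1 = (4 − 4α_1² − 6α_2 − 2α_1α_2 + 3α_1²α_2 − 4α_2² + 3α_2³)/(4(−4 + α_1² − α_1α_2 + α_2²)) and s_1 = (4 − 6α_1 − 4α_1² + 3α_1³ − 2α_1α_2 − 4α_2² + 3α_1α_2²)/(4(−4 + α_1² − α_1α_2 + α_2²)). Then ⟨f̃_{0,1}, f̃_{2,1}⟩ = ρ(α_1, α_2) / ( 12 (−4 + α_1² − α_1α_2 + α_2²)(8 − 6α_1 + α_1² − 6α_2 + 2α_1α_2 + α_2²) ); in particular ⟨f̃_{0,1}, f̃_{2,1}⟩ = 0 if and only if ρ(α_1, α_2) = 0. -/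

import Mathlib

open Set

/-- `f` is the self-affine FIF on `[0,1]` (partition `0, 1/2, 1`, hidden AFIF
component identically zero) with parameters `α₁, α₂` through the data
`(0, w₀), (1/2, w₁), (1, w₂)`. -/
def IsSAFIF2 (α₁ α₂ : ℝ) (f : ℝ → ℝ) (w₀ w₁ w₂ : ℝ) : Prop :=
  ContinuousOn f (Icc (0 : ℝ) 1) ∧
  (∃ c₁ d₁ c₂ d₂ : ℝ, ∀ u ∈ Icc (0 : ℝ) 1,
    f (u / 2) = α₁ * f u + (c₁ * u + d₁) ∧
    f ((u + 1) / 2) = α₂ * f u + (c₂ * u + d₂)) ∧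
  f 0 = w₀ ∧ f (1 / 2) = w₁ ∧ f 1 = w₂

/-- The polynomial `ρ(α₁, α₂)` of the paper. -/
def rho (a₁ a₂ : ℝ) : ℝ :=
  8 + 12 * a₁ - 28 * a₁ ^ 2 + 6 * a₁ ^ 3 + 2 * a₁ ^ 4 + 12 * a₂ - 14 * a₁ * a₂ +
    18 * a₁ ^ 2 * a₂ - 7 * a₁ ^ 3 * a₂ - 28 * a₂ ^ 2 + 18 * a₁ * a₂ ^ 2 +
    6 * a₂ ^ 3 - 7 * a₁ * a₂ ^ 3 + 2 * a₂ ^ 4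

open MeasureTheory intervalIntegral


lemma my_iint {f : ℝ → ℝ} (hf : ContinuousOn f (Icc 0 1)) :
    IntervalIntegrable f volume 0 1 :=
  hf.intervalIntegrable_of_Icc zero_le_one

lemma my_split {g : ℝ → ℝ} (hg : ContinuousOn g (Icc 0 1)) :
    ∫ u in (0:ℝ)..1, g u =
      (∫ u in (0:ℝ)..1, g (u/2))/2 + (∫ u in (0:ℝ)..1, g ((u+1)/2))/2 := by
  have i1 : IntervalIntegrable g volume 0 (1/2) :=
    (hg.mono (Icc_subset_Icc le_rfl (by norm_num))).intervalIntegrable_of_Icc (by norm_num)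
  have i2 : IntervalIntegrable g volume (1/2) 1 :=
    (hg.mono (Icc_subset_Icc (by norm_num) le_rfl)).intervalIntegrable_of_Icc (by norm_num)
  have key := integral_add_adjacent_intervals i1 i2
  have h1 : (∫ u in (0:ℝ)..1, g (u/2)) = 2 * ∫ x in (0:ℝ)..(1/2), g x := by
    rw [integral_comp_div g two_ne_zero]
    norm_num [smul_eq_mul]
  have h2 : (∫ u in (0:ℝ)..1, g ((u+1)/2)) = 2 * ∫ x in (1/2:ℝ)..1, g x := by
    have e : (fun u : ℝ => g ((u+1)/2)) = fun u : ℝ => g (2⁻¹ * u + 2⁻¹) := by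
      funext u; ring_nf
    rw [show (∫ u in (0:ℝ)..1, g ((u+1)/2)) = ∫ u in (0:ℝ)..1, g (2⁻¹ * u + 2⁻¹) from by rw [← e]]
    rw [integral_comp_mul_add g (by norm_num : (2:ℝ)⁻¹ ≠ 0) 2⁻¹]
    norm_num [smul_eq_mul]
  rw [h1, h2]
  linarith [key]


lemma my_master (f g : ℝ → ℝ) (hf : ContinuousOn f (Icc 0 1))
    (hg : ContinuousOn g (Icc 0 1)) (t0 t1 t2 t3 t4 t5 t6 t7 : ℝ) :
    (∫ u in (0:ℝ)..1, (t0 + t1*u + t2*u^2 + t3*f u + t4*(u*f u) + t5*g u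
        + t6*(u*g u) + t7*(f u * g u))) =
      t0 + t1/2 + t2/3 + t3*(∫ u in (0:ℝ)..1, f u) + t4*(∫ u in (0:ℝ)..1, u*f u)
        + t5*(∫ u in (0:ℝ)..1, g u) + t6*(∫ u in (0:ℝ)..1, u*g u)
        + t7*(∫ u in (0:ℝ)..1, f u * g u) := by
  have hif : IntervalIntegrable f volume 0 1 := hf.intervalIntegrable_of_Icc zero_le_one
  have hig : IntervalIntegrable g volume 0 1 := hg.intervalIntegrable_of_Icc zero_le_one
  have huf : IntervalIntegrable (fun u => u * f u) volume 0 1 :=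
    ((continuous_id.continuousOn).mul hf).intervalIntegrable_of_Icc zero_le_one
  have hug : IntervalIntegrable (fun u => u * g u) volume 0 1 :=
    ((continuous_id.continuousOn).mul hg).intervalIntegrable_of_Icc zero_le_one
  have hfg : IntervalIntegrable (fun u => f u * g u) volume 0 1 :=
    (hf.mul hg).intervalIntegrable_of_Icc zero_le_one
  have h0 : IntervalIntegrable (fun _ : ℝ => t0) volume 0 1 := intervalIntegrable_const
  have h1 : IntervalIntegrable (fun u : ℝ => t1*u) volume 0 1 :=
    (continuous_const.mul continuous_id).intervalIntegrable 0 1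
  have h2 : IntervalIntegrable (fun u : ℝ => t2*u^2) volume 0 1 :=
    (continuous_const.mul (continuous_pow 2)).intervalIntegrable 0 1
  have h3 := hif.const_mul t3
  have h4 := huf.const_mul t4
  have h5 := hig.const_mul t5
  have h6 := hug.const_mul t6
  have h7 := hfg.const_mul t7
  rw [integral_add (((((((h0.add h1).add h2).add h3).add h4).add h5).add h6)) h7,
      integral_add ((((((h0.add h1).add h2).add h3).add h4).add h5)) h6,
      integral_add (((((h0.add h1).add h2).add h3).add h4)) h5,
      integral_add ((((h0.add h1).add h2).add h3)) h4,
      integral_add (((h0.add h1).add h2)) h3,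
      integral_add ((h0.add h1)) h2,
      integral_add h0 h1,
      intervalIntegral.integral_const, intervalIntegral.integral_const_mul, intervalIntegral.integral_const_mul, intervalIntegral.integral_const_mul,
      intervalIntegral.integral_const_mul, intervalIntegral.integral_const_mul, intervalIntegral.integral_const_mul, integral_id]
  have hp : (∫ u in (0:ℝ)..1, u^2) = 1/3 := by
    rw [integral_pow]; norm_num
  rw [hp]
  norm_num
  ring

set_option maxHeartbeats 2000000 in
/-- With `r₁` and `s₁` given by the stated formulas,
`⟨f̃_{0,1}, f̃_{2,1}⟩ = ρ(α₁,α₂) / (12(−4+α₁²−α₁α₂+α₂²)(8−6α₁+α₁²−6α₂+2α₁α₂+α₂²))`;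
in particular `⟨f̃_{0,1}, f̃_{2,1}⟩ = 0` iff `ρ(α₁, α₂) = 0`. -/

theorem stmt15 (α₁ α₂ β₁ β₂ γ₁ γ₂ r₁ s₁ : ℝ)
    (hα₁ : |α₁| < 1) (hα₂ : |α₂| < 1) (hγ₁ : |γ₁| < 1) (hγ₂ : |γ₂| < 1)
    (hβγ₁ : |β₁| + |γ₁| < 1) (hβγ₂ : |β₂| + |γ₂| < 1)
    (f0 f2 : ℝ → ℝ)
    (hf0 : IsSAFIF2 α₁ α₂ f0 1 r₁ 0)
    (hf2 : IsSAFIF2 α₁ α₂ f2 0 s₁ 1)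
    (hr₁ : r₁ = (4 - 4 * α₁ ^ 2 - 6 * α₂ - 2 * α₁ * α₂ + 3 * α₁ ^ 2 * α₂ -
                  4 * α₂ ^ 2 + 3 * α₂ ^ 3) /
                (4 * (-4 + α₁ ^ 2 - α₁ * α₂ + α₂ ^ 2)))
    (hs₁ : s₁ = (4 - 6 * α₁ - 4 * α₁ ^ 2 + 3 * α₁ ^ 3 - 2 * α₁ * α₂ -
                  4 * α₂ ^ 2 + 3 * α₁ * α₂ ^ 2) /
                (4 * (-4 + α₁ ^ 2 - α₁ * α₂ + α₂ ^ 2))) :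
    (∫ u in (0:ℝ)..1, f0 u * f2 u) =
      rho α₁ α₂ /
        (12 * (-4 + α₁ ^ 2 - α₁ * α₂ + α₂ ^ 2) *
          (8 - 6 * α₁ + α₁ ^ 2 - 6 * α₂ + 2 * α₁ * α₂ + α₂ ^ 2)) ∧
    ((∫ u in (0:ℝ)..1, f0 u * f2 u) = 0 ↔ rho α₁ α₂ = 0) := by
  obtain ⟨hcf0, ⟨c₁, d₁, c₂, d₂, hfe0⟩, h00, h01, h02⟩ := hf0
  obtain ⟨hcf2, ⟨e₁, k₁, e₂, k₂, hfe2⟩, h20, h21, h22⟩ := hf2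
  have z0 := hfe0 0 (by norm_num)
  have z1 := hfe0 1 (by norm_num)
  have y0 := hfe2 0 (by norm_num)
  have y1 := hfe2 1 (by norm_num)
  obtain ⟨hm1a, hm1b⟩ := abs_lt.mp hα₁
  obtain ⟨hm2a, hm2b⟩ := abs_lt.mp hα₂
  have hsq1 : α₁^2 < 1 := by nlinarith
  have hsq2 : α₂^2 < 1 := by nlinarith
  have hDm : (-4+α₁^2-α₁*α₂+α₂^2) < 0 := by nlinarith [sq_nonneg (α₁+α₂)]
  have h4Dm : (4*(-4+α₁^2-α₁*α₂+α₂^2)) ≠ 0 := by intro h; nlinarith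
  have h2s : (0:ℝ) < 2-(α₁+α₂) := by linarith
  have h4s : (0:ℝ) < 4-(α₁+α₂) := by linarith
  have h2q : (0:ℝ) < 2-(α₁^2+α₂^2) := by linarith
  have hD2 : (0:ℝ) < 8-6*α₁+α₁^2-6*α₂+2*α₁*α₂+α₂^2 := by nlinarith [mul_pos h2s h4s]
  norm_num at z0 z1 y0 y1
  simp only [h00, h01, h02] at z0 z1
  simp only [h20, h21, h22] at y0 y1
  have hd₁ : d₁ = 1 - α₁ := by linarith [z0.1]
  have hc₁ : c₁ = r₁ - 1 + α₁ := by linarith [z1.1]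
  have hd₂ : d₂ = r₁ - α₂ := by linarith [z0.2]
  have hc₂ : c₂ = α₂ - r₁ := by linarith [z1.2]
  have hk₁ : k₁ = 0 := by linarith [y0.1]
  have he₁ : e₁ = s₁ - α₁ := by linarith [y1.1]
  have hk₂ : k₂ = s₁ := by linarith [y0.2]
  have he₂ : e₂ = 1 - α₂ - s₁ := by linarith [y1.2]
  rw [hc₁, hd₁, hc₂, hd₂] at hfe0
  rw [he₁, hk₁, he₂, hk₂] at hfe2
  have SA0 : (∫ u in (0:ℝ)..1, f0 u) = (((1-α₁)) + ((r₁-1+α₁))/2 + ((0:ℝ))/3 + (α₁)*(∫ u in (0:ℝ)..1, f0 u) + ((0:ℝ))*(∫ u in (0:ℝ)..1, u*f0 u) + ((0:ℝ))*(∫ u in (0:ℝ)..1, f2 u) + ((0:ℝ))*(∫ u in (0:ℝ)..1, u*f2 u) + ((0:ℝ))*(∫ u in (0:ℝ)..1, f0 u * f2 u))/2 + (((r₁-α₂)) + ((α₂-r₁))/2 + ((0:ℝ))/3 + (α₂)*(∫ u in (0:ℝ)..1, f0 u) + ((0:ℝ))*(∫ u in (0:ℝ)..1, u*f0 u) + ((0:ℝ))*(∫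 u in (0:ℝ)..1, f2 u) + ((0:ℝ))*(∫ u in (0:ℝ)..1, u*f2 u) + ((0:ℝ))*(∫ u in (0:ℝ)..1, f0 u * f2 u))/2 := by
    have S := my_split (g := f0) (hcf0)
    beta_reduce at S
    have C1 : (∫ u in (0:ℝ)..1, f0 (u / 2)) = ∫ u in (0:ℝ)..1, ((1-α₁) + (r₁-1+α₁)*u + (0:ℝ)*u^2 + α₁*f0 u + (0:ℝ)*(u*f0 u) + (0:ℝ)*f2 u + (0:ℝ)*(u*f2 u) + (0:ℝ)*(f0 u * f2 u)) := by
      apply intervalIntegral.integral_congr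
      intro u hu
      rw [Set.uIcc_of_le zero_le_one] at hu
      beta_reduce
      rw [(hfe0 u hu).1]
      ring
    have C2 : (∫ u in (0:ℝ)..1, f0 ((u + 1) / 2)) = ∫ u in (0:ℝ)..1, ((r₁-α₂) + (α₂-r₁)*u + (0:ℝ)*u^2 + α₂*f0 u + (0:ℝ)*(u*f0 u) + (0:ℝ)*f2 u + (0:ℝ)*(u*f2 u) + (0:ℝ)*(f0 u * f2 u)) := by
      apply intervalIntegral.integral_congr
      intro u hu
      rw [Set.uIcc_of_le zero_le_one] at hu
      beta_reduce
      rw [(hfe0 u hu).2]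
      ring
    rw [C1, C2, my_master f0 f2 hcf0 hcf2 ((1-α₁)) ((r₁-1+α₁)) ((0:ℝ)) (α₁) ((0:ℝ)) ((0:ℝ)) ((0:ℝ)) ((0:ℝ)), my_master f0 f2 hcf0 hcf2 ((r₁-α₂)) ((α₂-r₁)) ((0:ℝ)) (α₂) ((0:ℝ)) ((0:ℝ)) ((0:ℝ)) ((0:ℝ))] at S
    exact S
  have SB0 : (∫ u in (0:ℝ)..1, u * f0 u) = (((0:ℝ)) + (((1-α₁)/2))/2 + (((r₁-1+α₁)/2))/3 + ((0:ℝ))*(∫ u in (0:ℝ)..1, f0 u) + ((α₁/2))*(∫ u in (0:ℝ)..1, u*f0 u) + ((0:ℝ))*(∫ u in (0:ℝ)..1, f2 u) + ((0:ℝ))*(∫ u in (0:ℝ)..1, u*f2 u) + ((0:ℝ))*(∫ u in (0:ℝ)..1, f0 u * f2 u))/2 + ((((r₁-α₂)/2)) + ((((α₂-r₁)+(r₁-α₂))/2))/2 + (((α₂-r₁)/2))/3 + ((α₂/2))*(∫ u in (0:ℝ)..1, f0 u) + ((α₂/2))*(∫ u in (0:ℝ)..1, u*f0 u) + ((0:ℝ))*(∫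 u in (0:ℝ)..1, f2 u) + ((0:ℝ))*(∫ u in (0:ℝ)..1, u*f2 u) + ((0:ℝ))*(∫ u in (0:ℝ)..1, f0 u * f2 u))/2 := by
    have S := my_split (g := fun u => u * f0 u) ((continuous_id.continuousOn).mul hcf0)
    beta_reduce at S
    have C1 : (∫ u in (0:ℝ)..1, u / 2 * f0 (u / 2)) = ∫ u in (0:ℝ)..1, ((0:ℝ) + ((1-α₁)/2)*u + ((r₁-1+α₁)/2)*u^2 + (0:ℝ)*f0 u + (α₁/2)*(u*f0 u) + (0:ℝ)*f2 u + (0:ℝ)*(u*f2 u) + (0:ℝ)*(f0 u * f2 u)) := by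
      apply intervalIntegral.integral_congr
      intro u hu
      rw [Set.uIcc_of_le zero_le_one] at hu
      beta_reduce
      rw [(hfe0 u hu).1]
      ring
    have C2 : (∫ u in (0:ℝ)..1, (u + 1) / 2 * f0 ((u + 1) / 2)) = ∫ u in (0:ℝ)..1, (((r₁-α₂)/2) + (((α₂-r₁)+(r₁-α₂))/2)*u + ((α₂-r₁)/2)*u^2 + (α₂/2)*f0 u + (α₂/2)*(u*f0 u) + (0:ℝ)*f2 u + (0:ℝ)*(u*f2 u) + (0:ℝ)*(f0 u * f2 u)) := by
      apply intervalIntegral.integral_congr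
      intro u hu
      rw [Set.uIcc_of_le zero_le_one] at hu
      beta_reduce
      rw [(hfe0 u hu).2]
      ring
    rw [C1, C2, my_master f0 f2 hcf0 hcf2 ((0:ℝ)) (((1-α₁)/2)) (((r₁-1+α₁)/2)) ((0:ℝ)) ((α₁/2)) ((0:ℝ)) ((0:ℝ)) ((0:ℝ)), my_master f0 f2 hcf0 hcf2 (((r₁-α₂)/2)) ((((α₂-r₁)+(r₁-α₂))/2)) (((α₂-r₁)/2)) ((α₂/2)) ((α₂/2)) ((0:ℝ)) ((0:ℝ)) ((0:ℝ))] at S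
    exact S
  have SA2 : (∫ u in (0:ℝ)..1, f2 u) = (((0:ℝ)) + ((s₁-α₁))/2 + ((0:ℝ))/3 + ((0:ℝ))*(∫ u in (0:ℝ)..1, f0 u) + ((0:ℝ))*(∫ u in (0:ℝ)..1, u*f0 u) + (α₁)*(∫ u in (0:ℝ)..1, f2 u) + ((0:ℝ))*(∫ u in (0:ℝ)..1, u*f2 u) + ((0:ℝ))*(∫ u in (0:ℝ)..1, f0 u * f2 u))/2 + ((s₁) + ((1-α₂-s₁))/2 + ((0:ℝ))/3 + ((0:ℝ))*(∫ u in (0:ℝ)..1, f0 u) + ((0:ℝ))*(∫ u in (0:ℝ)..1, u*f0 u) + (α₂)*(∫ u in (0:ℝ)..1, f2 u) + ((0:ℝ))*(∫ u in (0:ℝ)..1, u*f2 u) + ((0:ℝ))*(∫ u in (0:ℝ)..1, f0 u * f2 u))/2 := by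
    have S := my_split (g := f2) (hcf2)
    beta_reduce at S
    have C1 : (∫ u in (0:ℝ)..1, f2 (u / 2)) = ∫ u in (0:ℝ)..1, ((0:ℝ) + (s₁-α₁)*u + (0:ℝ)*u^2 + (0:ℝ)*f0 u + (0:ℝ)*(u*f0 u) + α₁*f2 u + (0:ℝ)*(u*f2 u) + (0:ℝ)*(f0 u * f2 u)) := by
      apply intervalIntegral.integral_congr
      intro u hu
      rw [Set.uIcc_of_le zero_le_one] at hu
      beta_reduce
      rw [(hfe2 u hu).1]
      ring
    have C2 : (∫ u in (0:ℝ)..1, f2 ((u + 1) / 2)) = ∫ u in (0:ℝ)..1, (s₁ + (1-α₂-s₁)*u + (0:ℝ)*u^2 + (0:ℝ)*f0 u + (0:ℝ)*(u*f0 u) + α₂*f2 u + (0:ℝ)*(u*f2 u) + (0:ℝ)*(f0 u * f2 u)) := by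
      apply intervalIntegral.integral_congr
      intro u hu
      rw [Set.uIcc_of_le zero_le_one] at hu
      beta_reduce
      rw [(hfe2 u hu).2]
      ring
    rw [C1, C2, my_master f0 f2 hcf0 hcf2 ((0:ℝ)) ((s₁-α₁)) ((0:ℝ)) ((0:ℝ)) ((0:ℝ)) (α₁) ((0:ℝ)) ((0:ℝ)), my_master f0 f2 hcf0 hcf2 (s₁) ((1-α₂-s₁)) ((0:ℝ)) ((0:ℝ)) ((0:ℝ)) (α₂) ((0:ℝ)) ((0:ℝ))] at S
    exact S
  have SB2 : (∫ u in (0:ℝ)..1, u * f2 u) = (((0:ℝ)) + (((0:ℝ)/2))/2 + (((s₁-α₁)/2))/3 + ((0:ℝ))*(∫ u in (0:ℝ)..1, f0 u) + ((0:ℝ))*(∫ u in (0:ℝ)..1, u*f0 u) + ((0:ℝ))*(∫ u in (0:ℝ)..1, f2 u) + ((α₁/2))*(∫ u in (0:ℝ)..1, u*f2 u) + ((0:ℝ))*(∫ u in (0:ℝ)..1, f0 u * f2 u))/2 + (((s₁/2)) + ((((1-α₂-s₁)+s₁)/2))/2 + (((1-α₂-s₁)/2))/3 + ((0:ℝ))*(∫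 u in (0:ℝ)..1, f0 u) + ((0:ℝ))*(∫ u in (0:ℝ)..1, u*f0 u) + ((α₂/2))*(∫ u in (0:ℝ)..1, f2 u) + ((α₂/2))*(∫ u in (0:ℝ)..1, u*f2 u) + ((0:ℝ))*(∫ u in (0:ℝ)..1, f0 u * f2 u))/2 := by
    have S := my_split (g := fun u => u * f2 u) ((continuous_id.continuousOn).mul hcf2)
    beta_reduce at S
    have C1 : (∫ u in (0:ℝ)..1, u / 2 * f2 (u / 2)) = ∫ u in (0:ℝ)..1, ((0:ℝ) + ((0:ℝ)/2)*u + ((s₁-α₁)/2)*u^2 + (0:ℝ)*f0 u + (0:ℝ)*(u*f0 u) + (0:ℝ)*f2 u + (α₁/2)*(u*f2 u) + (0:ℝ)*(f0 u * f2 u)) := by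
      apply intervalIntegral.integral_congr
      intro u hu
      rw [Set.uIcc_of_le zero_le_one] at hu
      beta_reduce
      rw [(hfe2 u hu).1]
      ring
    have C2 : (∫ u in (0:ℝ)..1, (u + 1) / 2 * f2 ((u + 1) / 2)) = ∫ u in (0:ℝ)..1, ((s₁/2) + (((1-α₂-s₁)+s₁)/2)*u + ((1-α₂-s₁)/2)*u^2 + (0:ℝ)*f0 u + (0:ℝ)*(u*f0 u) + (α₂/2)*f2 u + (α₂/2)*(u*f2 u) + (0:ℝ)*(f0 u * f2 u)) := by
      apply intervalIntegral.integral_congr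
      intro u hu
      rw [Set.uIcc_of_le zero_le_one] at hu
      beta_reduce
      rw [(hfe2 u hu).2]
      ring
    rw [C1, C2, my_master f0 f2 hcf0 hcf2 ((0:ℝ)) (((0:ℝ)/2)) (((s₁-α₁)/2)) ((0:ℝ)) ((0:ℝ)) ((0:ℝ)) ((α₁/2)) ((0:ℝ)), my_master f0 f2 hcf0 hcf2 ((s₁/2)) ((((1-α₂-s₁)+s₁)/2)) (((1-α₂-s₁)/2)) ((0:ℝ)) ((0:ℝ)) ((α₂/2)) ((α₂/2)) ((0:ℝ))] at S
    exact S
  have SJ : (∫ u in (0:ℝ)..1, f0 u * f2 u) = ((((1-α₁)*(0:ℝ))) + (((r₁-1+α₁)*(0:ℝ)+(s₁-α₁)*(1-α₁)))/2 + (((r₁-1+α₁)*(s₁-α₁)))/3 + ((α₁*(0:ℝ)))*(∫ u in (0:ℝ)..1, f0 u) + ((α₁*(s₁-α₁)))*(∫ u in (0:ℝ)..1, u*f0 u) + ((α₁*(1-α₁)))*(∫ u in (0:ℝ)..1, f2 u) + ((α₁*(r₁-1+α₁)))*(∫ u in (0:ℝ)..1, u*f2 u) + ((α₁^2))*(∫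 u in (0:ℝ)..1, f0 u * f2 u))/2 + ((((r₁-α₂)*s₁)) + (((α₂-r₁)*s₁+(1-α₂-s₁)*(r₁-α₂)))/2 + (((α₂-r₁)*(1-α₂-s₁)))/3 + ((α₂*s₁))*(∫ u in (0:ℝ)..1, f0 u) + ((α₂*(1-α₂-s₁)))*(∫ u in (0:ℝ)..1, u*f0 u) + ((α₂*(r₁-α₂)))*(∫ u in (0:ℝ)..1, f2 u) + ((α₂*(α₂-r₁)))*(∫ u in (0:ℝ)..1, u*f2 u) + ((α₂^2))*(∫ u in (0:ℝ)..1, f0 u * f2 u))/2 := by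
    have S := my_split (g := fun u => f0 u * f2 u) (hcf0.mul hcf2)
    beta_reduce at S
    have C1 : (∫ u in (0:ℝ)..1, f0 (u / 2) * f2 (u / 2)) = ∫ u in (0:ℝ)..1, (((1-α₁)*(0:ℝ)) + ((r₁-1+α₁)*(0:ℝ)+(s₁-α₁)*(1-α₁))*u + ((r₁-1+α₁)*(s₁-α₁))*u^2 + (α₁*(0:ℝ))*f0 u + (α₁*(s₁-α₁))*(u*f0 u) + (α₁*(1-α₁))*f2 u + (α₁*(r₁-1+α₁))*(u*f2 u) + (α₁^2)*(f0 u * f2 u)) := by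
      apply intervalIntegral.integral_congr
      intro u hu
      rw [Set.uIcc_of_le zero_le_one] at hu
      beta_reduce
      rw [(hfe0 u hu).1, (hfe2 u hu).1]
      ring
    have C2 : (∫ u in (0:ℝ)..1, f0 ((u + 1) / 2) * f2 ((u + 1) / 2)) = ∫ u in (0:ℝ)..1, (((r₁-α₂)*s₁) + ((α₂-r₁)*s₁+(1-α₂-s₁)*(r₁-α₂))*u + ((α₂-r₁)*(1-α₂-s₁))*u^2 + (α₂*s₁)*f0 u + (α₂*(1-α₂-s₁))*(u*f0 u) + (α₂*(r₁-α₂))*f2 u + (α₂*(α₂-r₁))*(u*f2 u) + (α₂^2)*(f0 u * f2 u)) := by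
      apply intervalIntegral.integral_congr
      intro u hu
      rw [Set.uIcc_of_le zero_le_one] at hu
      beta_reduce
      rw [(hfe0 u hu).2, (hfe2 u hu).2]
      ring
    rw [C1, C2, my_master f0 f2 hcf0 hcf2 (((1-α₁)*(0:ℝ))) (((r₁-1+α₁)*(0:ℝ)+(s₁-α₁)*(1-α₁))) (((r₁-1+α₁)*(s₁-α₁))) ((α₁*(0:ℝ))) ((α₁*(s₁-α₁))) ((α₁*(1-α₁))) ((α₁*(r₁-1+α₁))) ((α₁^2)), my_master f0 f2 hcf0 hcf2 (((r₁-α₂)*s₁)) (((α₂-r₁)*s₁+(1-α₂-s₁)*(r₁-α₂))) (((α₂-r₁)*(1-α₂-s₁))) ((α₂*s₁)) ((α₂*(1-α₂-s₁))) ((α₂*(r₁-α₂))) ((α₂*(α₂-r₁))) ((α₂^2))] at S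
    exact S
  have hr1c : r₁ * (4*(-4+α₁^2-α₁*α₂+α₂^2)) = (3*α₁^2*α₂ - 4*α₁^2 - 2*α₁*α₂ + 3*α₂^3 - 4*α₂^2 - 6*α₂ + 4) := by
    rw [hr₁, div_mul_cancel₀ _ h4Dm]; ring
  have hs1c : s₁ * (4*(-4+α₁^2-α₁*α₂+α₂^2)) = (3*α₁^3 - 4*α₁^2 + 3*α₁*α₂^2 - 2*α₁*α₂ - 6*α₁ - 4*α₂^2 + 4) := by
    rw [hs₁, div_mul_cancel₀ _ h4Dm]; ring
  have HA0 : (∫ u in (0:ℝ)..1, f0 u) * ((2-(α₁+α₂))*(4*(-4+α₁^2-α₁*α₂+α₂^2))) = (-2*α₁^3 + 3*α₁^2*α₂ - 2*α₁^2 - 4*α₁*α₂ + 8*α₁ + α₂^3 - 2*α₂^2 + 2*α₂ - 4) := by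
    linear_combination (8*α₁^2 - 8*α₁*α₂ + 8*α₂^2 - 32) * SA0 + (1) * hr1c
  have HB0 : (∫ u in (0:ℝ)..1, u * f0 u) * ((4-(α₁+α₂))*(2-(α₁+α₂))*(4*(-4+α₁^2-α₁*α₂+α₂^2))) = ((2/3)*α₁^4 - (7/3)*α₁^3*α₂ + 2*α₁^3 + 6*α₁^2*α₂ - (28/3)*α₁^2 - (7/3)*α₁*α₂^3 + 6*α₁*α₂^2 - (14/3)*α₁*α₂ + 4*α₁ + (2/3)*α₂^4 + 2*α₂^3 - (28/3)*α₂^2 + 4*α₂ + (8/3)) := by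
    linear_combination (-16*α₁^3 + 32*α₁^2 - 32*α₁*α₂ + 64*α₁ - 16*α₂^3 + 32*α₂^2 + 64*α₂ - 128) * SB0 + (α₂) * HA0 + (-α₁ - α₂ + 2) * hr1c
  have HA2 : (∫ u in (0:ℝ)..1, f2 u) * ((2-(α₁+α₂))*(4*(-4+α₁^2-α₁*α₂+α₂^2))) = (α₁^3 - 2*α₁^2 + 3*α₁*α₂^2 - 4*α₁*α₂ + 2*α₁ - 2*α₂^3 - 2*α₂^2 + 8*α₂ - 4) := by
    linear_combination (8*α₁^2 - 8*α₁*α₂ + 8*α₂^2 - 32) * SA2 + (1) * hs1c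
  have HB2 : (∫ u in (0:ℝ)..1, u * f2 u) * ((4-(α₁+α₂))*(2-(α₁+α₂))*(4*(-4+α₁^2-α₁*α₂+α₂^2))) = (-(5/3)*α₁^4 + (4/3)*α₁^3*α₂ + 4*α₁^3 - 3*α₁^2*α₂^2 - (2/3)*α₁^2 + (4/3)*α₁*α₂^3 + 12*α₁*α₂^2 - (64/3)*α₁*α₂ + 8*α₁ + (4/3)*α₂^4 - 8*α₂^3 - (20/3)*α₂^2 + 32*α₂ - (56/3)) := by
    linear_combination (-16*α₁^3 + 32*α₁^2 - 32*α₁*α₂ + 64*α₁ - 16*α₂^3 + 32*α₂^2 + 64*α₂ - 128) * SB2 + (α₂) * HA2 + (-α₁ - α₂ + 2) * hs1c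
  have HJ : (∫ u in (0:ℝ)..1, f0 u * f2 u) * ((2-(α₁^2+α₂^2))*(2-(α₁+α₂))*(4-(α₁+α₂))*(4*(-4+α₁^2-α₁*α₂+α₂^2))^2) = (-(8/3)*α₁^8 + 12*α₁^7*α₂ - 8*α₁^7 - (44/3)*α₁^6*α₂^2 - 16*α₁^6*α₂ + (160/3)*α₁^6 + (92/3)*α₁^5*α₂^3 - 16*α₁^5*α₂^2 - 80*α₁^5*α₂ + 32*α₁^5 - 24*α₁^4*α₂^4 - 24*α₁^4*α₂^3 + 128*α₁^4*α₂^2 + 128*α₁^4*α₂ - 256*α₁^4 + (92/3)*α₁^3*α₂^5 - 24*α₁^3*α₂^4 - (448/3)*α₁^3*α₂^3 + 128*α₁^3*α₂^2 + 48*α₁^3*α₂ + 32*α₁^3 - (44/3)*α₁^2*α₂^6 - 16*α₁^2*α₂^5 + 128*α₁^2*α₂^4 + 128*α₁^2*α₂^3 - 432*α₁^2*α₂^2 - 128*α₁^2*α₂ + (1088/3)*α₁^2 + 12*α₁*α₂^7 - 16*α₁*α₂^6 - 80*α₁*α₂^5 + 128*α₁*α₂^4 + 48*α₁*α₂^3 -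 128*α₁*α₂^2 + 128*α₁*α₂ - 128*α₁ - (8/3)*α₂^8 - 8*α₂^7 + (160/3)*α₂^6 + 32*α₂^5 - 256*α₂^4 + 32*α₂^3 + (1088/3)*α₂^2 - 128*α₂ - (256/3)) := by
    linear_combination (32*α₁^6 - 192*α₁^5 + 192*α₁^4*α₂ + 64*α₁^3*α₂^3 - 192*α₁^3*α₂^2 - 768*α₁^3*α₂ + 1536*α₁^3 - 192*α₁^2*α₂^3 + 768*α₁^2*α₂^2 - 1536*α₁^2 + 192*α₁*α₂^4 - 768*α₁*α₂^3 + 3072*α₁*α₂ - 3072*α₁ + 32*α₂^6 - 192*α₂^5 + 1536*α₂^3 - 1536*α₂^2 - 3072*α₂ + 4096) * SJ + (-4*α₁^4 + 4*α₁^3*α₂ + 4*α₁^3*s₁ - 8*α₁^2*α₂^2 - 8*α₁^2*α₂*s₁ + 4*α₁^2*α₂ + 16*α₁^2 + 4*α₁*α₂^3 + 8*α₁*α₂^2*s₁ - 4*α₁*α₂^2 - 16*α₁*s₁ - 4*α₂^4 - 4*α₂^3*s₁ + 4*α₂^3 + 16*α₂^2 + 16*α₂*s₁ - 16*α₂) *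 HB0 + (4*α₁^4 - 4*α₁^3*α₂ + 4*α₁^3*r₁ - 4*α₁^3 + 8*α₁^2*α₂^2 - 8*α₁^2*α₂*r₁ + 4*α₁^2*α₂ - 16*α₁^2 - 4*α₁*α₂^3 + 8*α₁*α₂^2*r₁ - 4*α₁*α₂^2 - 16*α₁*r₁ + 16*α₁ + 4*α₂^4 - 4*α₂^3*r₁ - 16*α₂^2 + 16*α₂*r₁) * HB2 + (-4*α₁^3*α₂*s₁ + 16*α₁^2*α₂*s₁ - 16*α₁*α₂^2*s₁ + 16*α₁*α₂*s₁ - 4*α₂^4*s₁ + 16*α₂^3*s₁ + 16*α₂^2*s₁ - 64*α₂*s₁) * HA0 + (4*α₁^5 - 20*α₁^4 + 4*α₁^3*α₂^2 - 4*α₁^3*α₂*r₁ + 16*α₁^3*α₂ + 4*α₁^2*α₂^3 - 32*α₁^2*α₂^2 + 16*α₁^2*α₂*r₁ - 32*α₁^2*α₂ + 80*α₁^2 + 12*α₁*α₂^3 - 16*α₁*α₂^2*r₁ + 16*α₁*α₂*r₁ + 16*α₁*α₂ - 64*α₁ + 4*α₂^5 - 4*α₂^4*r₁ - 16*α₂^4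 + 16*α₂^3*r₁ - 16*α₂^3 + 16*α₂^2*r₁ + 64*α₂^2 - 64*α₂*r₁) * HA2 + (-3*α₁^5 + (8/3)*α₁^4*s₁ + (38/3)*α₁^4 - 6*α₁^3*α₂^2 + (8/3)*α₁^3*α₂*s₁ + (20/3)*α₁^3*α₂ - 16*α₁^3*s₁ - 10*α₁^3 + 18*α₁^2*α₂^2 - 12*α₁^2*α₂ + (32/3)*α₁^2*s₁ - (64/3)*α₁^2 - 3*α₁*α₂^4 + (8/3)*α₁*α₂^3*s₁ + (20/3)*α₁*α₂^3 - 6*α₁*α₂^2 - (128/3)*α₁*α₂*s₁ - (68/3)*α₁*α₂ + 64*α₁*s₁ + 40*α₁ + (8/3)*α₂^4*s₁ + (20/3)*α₂^4 - 16*α₂^3*s₁ - 16*α₂^3 + (32/3)*α₂^2*s₁ - (28/3)*α₂^2 + 64*α₂*s₁ + 40*α₂ - (256/3)*s₁ - (64/3)) * hr1c + (-α₁^4*α₂ + 4*α₁^4 + 4*α₁^3*α₂^2 - 12*α₁^3*α₂ - 2*α₁^2*α₂^3 - 2*α₁^2*α₂^2 + 30*α₁^2*α₂ - 28*α₁^2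 + 4*α₁*α₂^4 - 12*α₁*α₂^3 + 4*α₁*α₂^2 - 4*α₁*α₂ + 24*α₁ - α₂^5 - 2*α₂^4 + 18*α₂^3 - 16*α₂^2 - 8*α₂) * hs1c
  have hbig : (12 * (-4 + α₁ ^ 2 - α₁ * α₂ + α₂ ^ 2) * (8 - 6 * α₁ + α₁ ^ 2 - 6 * α₂ + 2 * α₁ * α₂ + α₂ ^ 2)) ≠ 0 := by
    have h1 : 12 * (-4 + α₁ ^ 2 - α₁ * α₂ + α₂ ^ 2) < 0 := by linarith
    exact ne_of_lt (mul_neg_of_neg_of_pos h1 hD2)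
  have hC : ((2-(α₁^2+α₂^2))*(2-(α₁+α₂))*(4-(α₁+α₂))*(4*(-4+α₁^2-α₁*α₂+α₂^2))^2) ≠ 0 :=
    mul_ne_zero (mul_ne_zero (mul_ne_zero (ne_of_gt h2q) (ne_of_gt h2s)) (ne_of_gt h4s)) (pow_ne_zero 2 h4Dm)
  have hmain : (∫ u in (0:ℝ)..1, f0 u * f2 u) = rho α₁ α₂ / (12 * (-4 + α₁ ^ 2 - α₁ * α₂ + α₂ ^ 2) * (8 - 6 * α₁ + α₁ ^ 2 - 6 * α₂ + 2 * α₁ * α₂ + α₂ ^ 2)) := by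
    rw [eq_div_iff hbig, rho]
    refine mul_right_cancel₀ hC ?_
    linear_combination (12*(-4+α₁^2-α₁*α₂+α₂^2)*(8-6*α₁+α₁^2-6*α₂+2*α₁*α₂+α₂^2)) * HJ
  refine ⟨hmain, ?_⟩
  rw [hmain, div_eq_zero_iff]
  exact or_iff_left hbig
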